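/- An inverse semigroup has rational word problem if and only if it is finite. -/

import Mathlib

/-- The monoid homomorphism `(A ⊕ A)* → A* × A*` sending `inl a ↦ (a, ε)` and
`inr a ↦ (ε, a)`, used to define rational (asynchronous two-tape) relations. -/
def twoTapeHom (A : Type) : FreeMonoid (A ⊕ A) →* FreeMonoid A × FreeMonoid A :=
  FreeMonoid.lift (Sum.elim (fun a => (FreeMonoid.of a, 1)) (fun a => (1, FreeMonoid.of a)))

/-- A relation `R ⊆ A* × A*` is rational if it is the image of a regular language
over the alphabet `A ⊕ A` under `twoTapeHom`; equivalently, it is recognised by a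
two-tape asynchronous finite automaton. -/
def IsRationalRel {A : Type} (R : Set (FreeMonoid A × FreeMonoid A)) : Prop :=
  ∃ L : Language (A ⊕ A), L.IsRegular ∧
    twoTapeHom A '' {w : FreeMonoid (A ⊕ A) | w.toList ∈ L} = R

/-- The canonical embedding of the free semigroup `A⁺` into the free monoid `A*`. -/
def freeSemigroupToWord {A : Type} : FreeSemigroup A →ₙ* FreeMonoid A :=
  FreeSemigroup.lift FreeMonoid.of

/-- The two-tape word problem `ι(S,A)` of a semigroup `S` with respect to a
(generating) map `f : A → S`: all pairs of nonempty words over `A` whose images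
in `S` coincide, viewed as a relation on words in `A*`. -/
def wordProblem {A S : Type} [Semigroup S] (f : A → S) :
    Set (FreeMonoid A × FreeMonoid A) :=
  {p | ∃ w₁ w₂ : FreeSemigroup A,
        FreeSemigroup.lift f w₁ = FreeSemigroup.lift f w₂ ∧
        p = (freeSemigroupToWord w₁, freeSemigroupToWord w₂)}

/-- A semigroup has rational word problem if it is generated by some finite set `A`
(i.e. there is `f : A → S` with the induced homomorphism `A⁺ → S` surjective) for
which the two-tape word problem is a rational relation. -/
def HasRationalWordProblem (S : Type) [Semigroup S] : Prop :=
  ∃ (A : Type) (_ : Fintype A) (f : A → S),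
    Function.Surjective ⇑(FreeSemigroup.lift f) ∧ IsRationalRel (wordProblem f)

namespace InvWP

open List

variable {A S : Type} [Semigroup S]

/-- first-tape projection of a two-tape word -/
def lam : List (A ⊕ A) → List A :=
  fun u => u.filterMap (fun c => Sum.elim some (fun _ => none) c)

/-- second-tape projection of a two-tape word -/
def rho : List (A ⊕ A) → List A :=
  fun u => u.filterMap (fun c => Sum.elim (fun _ => none) some c)

@[simp] lemma lam_nil : lam ([] : List (A ⊕ A)) = [] := rfl
@[simp] lemma rho_nil : rho ([] : List (A ⊕ A)) = [] := rfl
@[simp] lemma lam_cons_inl (a : A) (u : List (A ⊕ A)) : lam (Sum.inl a :: u) = a :: lam u := rfl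
@[simp] lemma lam_cons_inr (a : A) (u : List (A ⊕ A)) : lam (Sum.inr a :: u) = lam u := rfl
@[simp] lemma rho_cons_inl (a : A) (u : List (A ⊕ A)) : rho (Sum.inl a :: u) = rho u := rfl
@[simp] lemma rho_cons_inr (a : A) (u : List (A ⊕ A)) : rho (Sum.inr a :: u) = a :: rho u := rfl

@[simp] lemma lam_append (u v : List (A ⊕ A)) : lam (u ++ v) = lam u ++ lam v :=
  List.filterMap_append ..
@[simp] lemma rho_append (u v : List (A ⊕ A)) : rho (u ++ v) = rho u ++ rho v :=
  List.filterMap_append ..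

@[simp] lemma lam_map_inl (l : List A) : lam (l.map Sum.inl) = l := by
  induction l with
  | nil => rfl
  | cons a l ih => simp [ih]

@[simp] lemma rho_map_inl (l : List A) : rho (l.map Sum.inl) = [] := by
  induction l with
  | nil => rfl
  | cons a l ih => simp [ih]

@[simp] lemma lam_map_inr (l : List A) : lam (l.map Sum.inr) = [] := by
  induction l with
  | nil => rfl
  | cons a l ih => simp [ih]

@[simp] lemma rho_map_inr (l : List A) : rho (l.map Sum.inr) = l := by
  induction l with
  | nil => rfl
  | cons a l ih => simp [ih]

lemma twoTapeHom_ofList (l : List (A ⊕ A)) :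
    twoTapeHom A (FreeMonoid.ofList l) =
      (FreeMonoid.ofList (lam l), FreeMonoid.ofList (rho l)) := by
  induction l with
  | nil => exact map_one (twoTapeHom A)
  | cons c l ih =>
    rw [FreeMonoid.ofList_cons, map_mul, ih]
    cases c with
    | inl a =>
      show (twoTapeHom A (FreeMonoid.of (Sum.inl a))) * _ = _
      rw [twoTapeHom, FreeMonoid.lift_eval_of]
      simp only [Sum.elim_inl, Prod.mk_mul_mk, one_mul, lam_cons_inl, rho_cons_inl]
      rw [← FreeMonoid.ofList_cons]
    | inr a =>
      show (twoTapeHom A (FreeMonoid.of (Sum.inr a))) * _ = _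
      rw [twoTapeHom, FreeMonoid.lift_eval_of]
      simp only [Sum.elim_inr, Prod.mk_mul_mk, one_mul, lam_cons_inr, rho_cons_inr]
      rw [← FreeMonoid.ofList_cons]

/-- evaluation of a word in `WithOne S` -/
def ev (f : A → S) (l : List A) : WithOne S := (l.map (fun a => (f a : WithOne S))).prod

@[simp] lemma ev_nil (f : A → S) : ev f [] = 1 := rfl

@[simp] lemma ev_cons (f : A → S) (a : A) (l : List A) :
    ev f (a :: l) = (f a : WithOne S) * ev f l := by simp [ev]

@[simp] lemma ev_append (f : A → S) (l₁ l₂ : List A) :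
    ev f (l₁ ++ l₂) = ev f l₁ * ev f l₂ := by simp [ev]

lemma ev_eq_coe (f : A → S) (l : List A) (h : l ≠ []) : ∃ s : S, ev f l = (s : WithOne S) := by
  induction l with
  | nil => exact absurd rfl h
  | cons a l ih =>
    rcases eq_or_ne l [] with rfl | hl
    · exact ⟨f a, by simp⟩
    · obtain ⟨s, hs⟩ := ih hl
      exact ⟨f a * s, by simp [hs, WithOne.coe_mul]⟩

lemma ev_ne_one (f : A → S) (l : List A) (h : l ≠ []) : ev f l ≠ 1 := by
  obtain ⟨s, hs⟩ := ev_eq_coe f l h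
  rw [hs]; exact WithOne.coe_ne_one

lemma ev_fsw (f : A → S) (w : FreeSemigroup A) :
    ev f (FreeMonoid.toList (freeSemigroupToWord w)) = (FreeSemigroup.lift f w : WithOne S) := by
  induction w with
  | ih1 a =>
    show ev f (FreeMonoid.toList (freeSemigroupToWord (FreeSemigroup.of a))) = _
    rw [freeSemigroupToWord, FreeSemigroup.lift_of, FreeSemigroup.lift_of]
    simp [FreeMonoid.toList_of]
  | ih2 x y hx hy =>
    have h : freeSemigroupToWord (FreeSemigroup.of x * y)
        = freeSemigroupToWord (FreeSemigroup.of x) * freeSemigroupToWord y := map_mul ..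
    rw [h, FreeMonoid.toList_mul, ev_append, hx, hy, map_mul, WithOne.coe_mul]

lemma fsw_ne_nil (w : FreeSemigroup A) : FreeMonoid.toList (freeSemigroupToWord w) ≠ [] := by
  induction w with
  | ih1 a =>
    rw [freeSemigroupToWord, FreeSemigroup.lift_of]
    simp [FreeMonoid.toList_of]
  | ih2 x y hx hy =>
    have h : freeSemigroupToWord (FreeSemigroup.of x * y)
        = freeSemigroupToWord (FreeSemigroup.of x) * freeSemigroupToWord y := map_mul ..
    rw [h, FreeMonoid.toList_mul]
    simp only [ne_eq, List.append_eq_nil_iff]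
    tauto

lemma exists_fsw (l : List A) (h : l ≠ []) :
    ∃ w : FreeSemigroup A, freeSemigroupToWord w = FreeMonoid.ofList l := by
  induction l with
  | nil => exact absurd rfl h
  | cons a l ih =>
    rcases eq_or_ne l [] with rfl | hl
    · exact ⟨FreeSemigroup.of a, by rw [freeSemigroupToWord, FreeSemigroup.lift_of]; rfl⟩
    · obtain ⟨w, hw⟩ := ih hl
      refine ⟨FreeSemigroup.of a * w, ?_⟩
      have h : freeSemigroupToWord (FreeSemigroup.of a * w)
          = freeSemigroupToWord (FreeSemigroup.of a) * freeSemigroupToWord w := map_mul ..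
      rw [h, hw, freeSemigroupToWord, FreeSemigroup.lift_of, FreeMonoid.ofList_cons]

lemma mem_wordProblem_iff (f : A → S) (x y : FreeMonoid A) :
    (x, y) ∈ wordProblem f ↔
      FreeMonoid.toList x ≠ [] ∧ FreeMonoid.toList y ≠ [] ∧
        ev f (FreeMonoid.toList x) = ev f (FreeMonoid.toList y) := by
  constructor
  · rintro ⟨w₁, w₂, heq, hpair⟩
    obtain ⟨h1, h2⟩ := Prod.mk.injEq .. ▸ hpair
    subst h1; subst h2
    exact ⟨fsw_ne_nil w₁, fsw_ne_nil w₂, by rw [ev_fsw, ev_fsw, heq]⟩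
  · rintro ⟨hx, hy, hev⟩
    obtain ⟨w₁, hw₁⟩ := exists_fsw (FreeMonoid.toList x) hx
    obtain ⟨w₂, hw₂⟩ := exists_fsw (FreeMonoid.toList y) hy
    rw [FreeMonoid.ofList_toList] at hw₁ hw₂
    refine ⟨w₁, w₂, ?_, by rw [hw₁, hw₂]⟩
    have e1 := ev_fsw f w₁
    have e2 := ev_fsw f w₂
    rw [hw₁] at e1; rw [hw₂] at e2
    rw [e1, e2] at hev
    exact_mod_cast hev


section InverseAlgebra

variable (hinv : ∀ u : S, ∃! v : S, u * v * u = u ∧ v * u * v = v)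

include hinv

/-- the (unique) inverse -/
noncomputable def inv (u : S) : S := (hinv u).exists.choose

lemma inv_spec₁ (u : S) : u * inv hinv u * u = u := (hinv u).exists.choose_spec.1
lemma inv_spec₂ (u : S) : inv hinv u * u * inv hinv u = inv hinv u :=
  (hinv u).exists.choose_spec.2

lemma inv_unique {u v : S} (h1 : u * v * u = u) (h2 : v * u * v = v) : v = inv hinv u := by
  obtain ⟨w, hw, huniq⟩ := hinv u
  rw [huniq v ⟨h1, h2⟩, huniq (inv hinv u) ⟨inv_spec₁ hinv u, inv_spec₂ hinv u⟩]

lemma idem_sxx (s : S) : (s * inv hinv s) * (s * inv hinv s) = s * inv hinv s := by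
  have h := inv_spec₁ hinv s
  calc (s * inv hinv s) * (s * inv hinv s) = (s * inv hinv s * s) * inv hinv s := by
        simp only [mul_assoc]
    _ = s * inv hinv s := by rw [h]

lemma idem_xxs (s : S) : (inv hinv s * s) * (inv hinv s * s) = inv hinv s * s := by
  have h := inv_spec₂ hinv s
  calc (inv hinv s * s) * (inv hinv s * s) = (inv hinv s * s * inv hinv s) * s := by
        simp only [mul_assoc]
    _ = inv hinv s * s := by rw [h]

/-- product of idempotents is idempotent (and equals the chosen inverse of itself) -/
lemma idem_mul {e f : S} (he : e * e = e) (hf : f * f = f) : (e * f) * (e * f) = e * f := by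
  set x := inv hinv (e * f) with hx
  have h1 : (e * f) * x * (e * f) = e * f := inv_spec₁ hinv (e * f)
  have h2 : x * (e * f) * x = x := inv_spec₂ hinv (e * f)
  set g := f * x * e with hg
  have hgg : g * g = g := by
    calc g * g = f * (x * (e * f) * x) * e := by simp only [hg, mul_assoc]
      _ = g := by rw [h2, hg]
  have hg1 : (e * f) * g * (e * f) = e * f := by
    calc (e * f) * g * (e * f) = e * ((f * f) * x * (e * e)) * f := by
          simp only [hg, mul_assoc]
      _ = e * (f * x * e) * f := by rw [hf, he]
      _ = (e * f) * x * (e * f) := by simp only [mul_assoc]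
      _ = e * f := h1
  have hg2 : g * (e * f) * g = g := by
    calc g * (e * f) * g = f * (x * ((e * e) * (f * f)) * x) * e := by
          simp only [hg, mul_assoc]
      _ = f * (x * (e * f) * x) * e := by rw [he, hf]
      _ = g := by rw [h2, hg]
  have hgx : g = x := inv_unique hinv hg1 hg2
  -- x is idempotent, and both x and e*f are inverses of x, hence e*f = x
  have hxx : x * x = x := by rw [← hgx]; exact hgg
  have hid1 : x * x * x = x := by rw [hxx, hxx]
  have hefinv : e * f = inv hinv x := by
    refine inv_unique hinv ?_ ?_
    · rw [← mul_assoc] at h2 ⊢; exact h2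
    · exact h1
  have hxinv : x = inv hinv x := inv_unique hinv hid1 hid1
  have : e * f = x := by rw [hefinv, ← hxinv]
  rw [this]; exact hxx

/-- idempotents commute -/
lemma idem_comm {e f : S} (he : e * e = e) (hf : f * f = f) : e * f = f * e := by
  have hef : (e * f) * (e * f) = e * f := idem_mul hinv he hf
  have hfe : (f * e) * (f * e) = f * e := idem_mul hinv hf he
  have h1 : (e * f) * (f * e) * (e * f) = e * f := by
    calc (e * f) * (f * e) * (e * f) = e * (f * f) * (e * e) * f := by simp only [mul_assoc]
      _ = e * f * (e * f) := by rw [hf, he]; simp only [mul_assoc]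
      _ = e * f := hef
  have h2 : (f * e) * (e * f) * (f * e) = f * e := by
    calc (f * e) * (e * f) * (f * e) = f * (e * e) * (f * f) * e := by simp only [mul_assoc]
      _ = f * e * (f * e) := by rw [he, hf]; simp only [mul_assoc]
      _ = f * e := hfe
  have hefid : (e * f) * (e * f) * (e * f) = e * f := by rw [hef, hef]
  have hfeinv : f * e = inv hinv (e * f) := inv_unique hinv h1 h2
  have hefinv : e * f = inv hinv (e * f) := inv_unique hinv hefid hefid
  rw [← hfeinv] at hefinv
  exact hefinv

lemma eq_of_mul_inv_eq {a b g : S} (ha2 : inv hinv a * a = g) (hb1 : b * inv hinv b = g)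
    (hb2 : inv hinv b * b = g) (hab : a * inv hinv b = g) : a = b := by
  have e1 : a * g = a := by rw [← ha2, ← mul_assoc, inv_spec₁ hinv]
  have e2 : g * b = b := by rw [← hb1, inv_spec₁ hinv]
  calc a = a * g := e1.symm
    _ = a * (inv hinv b * b) := by rw [hb2]
    _ = (a * inv hinv b) * b := by rw [mul_assoc]
    _ = g * b := by rw [hab]
    _ = b := e2

end InverseAlgebra

section Lists

variable {A : Type}

lemma exists_cut (u : List (A ⊕ A)) (t : ℕ) (h : t ≤ (lam u).length) :
    ∃ k, (lam (u.take k)).length = t := by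
  induction u generalizing t with
  | nil =>
    simp only [lam_nil, List.length_nil, Nat.le_zero] at h
    exact ⟨0, by simp [h]⟩
  | cons c u ih =>
    cases t with
    | zero => exact ⟨0, by simp⟩
    | succ t' =>
      cases c with
      | inl a =>
        simp only [lam_cons_inl, List.length_cons, Nat.succ_le_succ_iff] at h
        obtain ⟨k, hk⟩ := ih t' h
        exact ⟨k + 1, by simpa using hk⟩
      | inr a =>
        simp only [lam_cons_inr] at h
        obtain ⟨k, hk⟩ := ih (t' + 1) h
        exact ⟨k + 1, by simpa using hk⟩

lemma lam_take_mono (u : List (A ⊕ A)) {a b : ℕ} (h : a ≤ b) :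
    (lam (u.take a)).length ≤ (lam (u.take b)).length := by
  have : u.take b = u.take a ++ (u.drop a).take (b - a) := by
    rw [← List.take_add]; congr 1; omega
  rw [this, lam_append, List.length_append]
  omega

lemma length_flatten_replicate (k : ℕ) (v : List A) :
    ((List.replicate k v).flatten).length = k * v.length := by
  induction k with
  | zero => simp
  | succ k ih => simp [List.replicate_succ, ih, Nat.succ_mul, Nat.add_comm]

lemma take_flatten_replicate {i K : ℕ} (h : i ≤ K) (v : List A) :
    ((List.replicate K v).flatten).take (i * v.length) = (List.replicate i v).flatten := by
  induction i generalizing K with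
  | zero => simp
  | succ i ih =>
    cases K with
    | zero => omega
    | succ K =>
      rw [List.replicate_succ, List.replicate_succ, List.flatten_cons, List.flatten_cons]
      have harith : (i + 1) * v.length = v.length + i * v.length := by ring
      rw [harith, List.take_add, List.take_left, List.drop_left]
      rw [ih (by omega)]

lemma flatten_replicate_ne_nil {K : ℕ} (hK : 0 < K) {v : List A} (hv : v ≠ []) :
    (List.replicate K v).flatten ≠ [] := by
  cases K with
  | zero => omega
  | succ K =>
    rw [List.replicate_succ, List.flatten_cons]
    simp only [ne_eq, List.append_eq_nil_iff]
    tauto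

variable {S : Type} [Semigroup S]

lemma ev_flatten_replicate (f : A → S) (k : ℕ) (v : List A) :
    ev f ((List.replicate k v).flatten) = (ev f v) ^ k := by
  induction k with
  | zero => simp
  | succ k ih => rw [List.replicate_succ, List.flatten_cons, ev_append, ih, pow_succ']

lemma coe_pow_idem {e : S} (he : e * e = e) {k : ℕ} (hk : 0 < k) :
    ((e : WithOne S)) ^ k = (e : WithOne S) := by
  induction k with
  | zero => omega
  | succ k ih =>
    rcases Nat.eq_zero_or_pos k with rfl | hk'
    · simp
    · rw [pow_succ, ih hk', ← WithOne.coe_mul, he]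

end Lists

section Automaton

variable {A S : Type} [Semigroup S] {f : A → S} {σ : Type} [Fintype σ] {M : DFA (A ⊕ A) σ}

/-- membership in the word problem yields an accepted interleaved witness -/
lemma witness_of_eq
    (himg : twoTapeHom A '' {w : FreeMonoid (A ⊕ A) | w.toList ∈ M.accepts} = wordProblem f)
    (x y : List A) (hx : x ≠ []) (hy : y ≠ []) (h : ev f x = ev f y) :
    ∃ u : List (A ⊕ A), u ∈ M.accepts ∧ lam u = x ∧ rho u = y := by
  have hmem : ((FreeMonoid.ofList x : FreeMonoid A), (FreeMonoid.ofList y : FreeMonoid A))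
      ∈ wordProblem f := by
    rw [mem_wordProblem_iff]
    refine ⟨by simpa [FreeMonoid.toList_ofList] using hx,
      by simpa [FreeMonoid.toList_ofList] using hy, ?_⟩
    simpa [FreeMonoid.toList_ofList] using h
  rw [← himg] at hmem
  obtain ⟨w, hw, hweq⟩ := hmem
  rw [← FreeMonoid.ofList_toList w, twoTapeHom_ofList] at hweq
  have h1 : FreeMonoid.ofList (lam (FreeMonoid.toList w)) = FreeMonoid.ofList x :=
    congrArg Prod.fst hweq
  have h2 : FreeMonoid.ofList (rho (FreeMonoid.toList w)) = FreeMonoid.ofList y :=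
    congrArg Prod.snd hweq
  exact ⟨FreeMonoid.toList w, hw, FreeMonoid.ofList.injective h1,
    FreeMonoid.ofList.injective h2⟩

/-- any accepted word has equal evaluations of its two projections -/
lemma eq_of_accept
    (himg : twoTapeHom A '' {w : FreeMonoid (A ⊕ A) | w.toList ∈ M.accepts} = wordProblem f)
    (u : List (A ⊕ A)) (hu : u ∈ M.accepts) : ev f (lam u) = ev f (rho u) := by
  have hmem : twoTapeHom A (FreeMonoid.ofList u) ∈ wordProblem f := by
    rw [← himg]
    exact Set.mem_image_of_mem _ (by simpa [Set.mem_setOf_eq, FreeMonoid.toList_ofList] using hu)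
  rw [twoTapeHom_ofList] at hmem
  have := (mem_wordProblem_iff f _ _).1 hmem
  simpa [FreeMonoid.toList_ofList] using this.2.2

variable (M) in
/-- loop states: tape-2-silent loops reading a nonzero number of aligned `V e`-blocks -/
def LpSet (V : S → List A) (e : S) : Set σ :=
  {q | ∃ (d : ℕ) (w : List (A ⊕ A)), 0 < d ∧ M.evalFrom q w = q ∧ rho w = [] ∧
        lam w = (List.replicate d (V e)).flatten}

variable (M) in
/-- boundary states occurring at aligned block boundaries in accepted witnesses of
`((V e)^(a+b), V e)` -/
def BdSet (V : S → List A) (e : S) : Set σ :=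
  {q | ∃ (u₁ u₂ : List (A ⊕ A)) (a b : ℕ), (u₁ ++ u₂) ∈ M.accepts ∧
        M.evalFrom M.start u₁ = q ∧
        lam u₁ = (List.replicate a (V e)).flatten ∧
        lam u₂ = (List.replicate b (V e)).flatten ∧
        0 < a + b ∧ rho (u₁ ++ u₂) = V e}

lemma absorb_of_mem
    (hinv : ∀ u : S, ∃! v : S, u * v * u = u ∧ v * u * v = v)
    (himg : twoTapeHom A '' {w : FreeMonoid (A ⊕ A) | w.toList ∈ M.accepts} = wordProblem f)
    {V : S → List A} (hVev : ∀ s, ev f (V s) = (s : WithOne S))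
    {e₁ e₂ : S} (he₁ : e₁ * e₁ = e₁) (he₂ : e₂ * e₂ = e₂)
    {q : σ} (hqL : q ∈ LpSet M V e₁) (hqB : q ∈ BdSet M V e₂) : e₂ * e₁ = e₂ := by
  obtain ⟨d, w, hd, hloop, hrw, hlw⟩ := hqL
  obtain ⟨u₁, u₂, a, b, hacc, hq1, hl1, hl2, hab, hr⟩ := hqB
  -- the new accepted word
  have haccnew : (u₁ ++ (w ++ u₂)) ∈ M.accepts := by
    rw [DFA.mem_accepts] at hacc ⊢
    have h1 : M.eval (u₁ ++ (w ++ u₂)) = M.evalFrom q u₂ := by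
      rw [DFA.eval, DFA.evalFrom_of_append, DFA.evalFrom_of_append, hq1, hloop]
    have h2 : M.eval (u₁ ++ u₂) = M.evalFrom q u₂ := by
      rw [DFA.eval, DFA.evalFrom_of_append, hq1]
    rw [h1, ← h2]; exact hacc
  have hEv := eq_of_accept himg _ haccnew
  have hevl : ev f (lam (u₁ ++ (w ++ u₂)))
      = ((e₂ : WithOne S)) ^ a * ((e₁ : WithOne S)) * ((e₂ : WithOne S)) ^ b := by
    rw [lam_append, lam_append, ev_append, ev_append, hl1, hl2, hlw,
      ev_flatten_replicate, ev_flatten_replicate, ev_flatten_replicate, hVev, hVev,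
      coe_pow_idem he₁ hd, mul_assoc]
  have hevr : ev f (rho (u₁ ++ (w ++ u₂))) = (e₂ : WithOne S) := by
    have : rho (u₁ ++ (w ++ u₂)) = rho (u₁ ++ u₂) := by
      rw [rho_append, rho_append, rho_append, hrw]; simp
    rw [this, hr, hVev]
  rw [hevl, hevr] at hEv
  -- case analysis on a, b
  have hcomm := idem_comm hinv he₁ he₂
  rcases Nat.eq_zero_or_pos a with rfl | ha
  · rcases Nat.eq_zero_or_pos b with rfl | hb
    · omega
    · rw [pow_zero, one_mul, coe_pow_idem he₂ hb, ← WithOne.coe_mul] at hEv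
      have : e₁ * e₂ = e₂ := WithOne.coe_inj.mp hEv
      rw [← hcomm]; exact this
  · rcases Nat.eq_zero_or_pos b with rfl | hb
    · rw [pow_zero, mul_one, coe_pow_idem he₂ ha, ← WithOne.coe_mul] at hEv
      exact WithOne.coe_inj.mp hEv
    · rw [coe_pow_idem he₂ ha, coe_pow_idem he₂ hb, ← WithOne.coe_mul,
        ← WithOne.coe_mul] at hEv
      have h3 : e₂ * e₁ * e₂ = e₂ := WithOne.coe_inj.mp hEv
      have h4 : e₂ * e₁ * e₂ = e₂ * e₁ := by
        calc e₂ * e₁ * e₂ = e₂ * (e₁ * e₂) := by rw [mul_assoc]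
          _ = e₂ * (e₂ * e₁) := by rw [hcomm]
          _ = (e₂ * e₂) * e₁ := by rw [mul_assoc]
          _ = e₂ * e₁ := by rw [he₂]
      rw [h4] at h3; exact h3

lemma exists_common
    (himg : twoTapeHom A '' {w : FreeMonoid (A ⊕ A) | w.toList ∈ M.accepts} = wordProblem f)
    {V : S → List A} (hVne : ∀ s, V s ≠ []) (hVev : ∀ s, ev f (V s) = (s : WithOne S))
    {e : S} (he : e * e = e) : (LpSet M V e ∩ BdSet M V e).Nonempty := by
  set v := V e with hv
  set m := v.length with hm
  have hmpos : 0 < m := List.length_pos_iff.mpr (hVne e)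
  set n := Fintype.card σ with hn
  have hnpos : 0 < n := Fintype.card_pos_iff.mpr ⟨M.start⟩
  set K := n * (m + 1) with hK
  have hKpos : 0 < K := by positivity
  set x := (List.replicate K v).flatten with hx
  have hxev : ev f x = (e : WithOne S) := by
    rw [hx, ev_flatten_replicate, hVev, coe_pow_idem he hKpos]
  obtain ⟨u, hu, hlam, hrho⟩ := witness_of_eq himg x v
    (flatten_replicate_ne_nil hKpos (hVne e)) (hVne e) (by rw [hxev, hVev])
  have hlen : (lam u).length = K * m := by rw [hlam, hx, length_flatten_replicate]
  have hcut : ∀ i : Fin (K + 1), ∃ k, (lam (u.take k)).length = i.1 * m := by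
    intro i
    refine exists_cut u _ ?_
    rw [hlen]
    exact Nat.mul_le_mul_right m (by omega)
  choose k hk using hcut
  have hrlen : ∀ i : Fin (K + 1), (rho (u.take (k i))).length ≤ m := by
    intro i
    have hdecomp : rho u = rho (u.take (k i)) ++ rho (u.drop (k i)) := by
      rw [← rho_append, List.take_append_drop]
    have : (rho u).length = m := by rw [hrho]
    rw [hdecomp, List.length_append] at this
    omega
  set g : Fin (K + 1) → σ × Fin (m + 1) := fun i =>
    (M.evalFrom M.start (u.take (k i)), ⟨(rho (u.take (k i))).length, by
      have := hrlen i; omega⟩) with hg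
  have hcard : Fintype.card (σ × Fin (m + 1)) < Fintype.card (Fin (K + 1)) := by
    rw [Fintype.card_prod, Fintype.card_fin, Fintype.card_fin, ← hn]
    omega
  obtain ⟨i₀, j₀, hne, heqg⟩ := Fintype.exists_ne_map_eq_of_card_lt g hcard
  -- wlog i < j
  have main : ∀ i j : Fin (K + 1), i < j → g i = g j →
      (LpSet M V e ∩ BdSet M V e).Nonempty := by
    intro i j hij heq
    have hstate : M.evalFrom M.start (u.take (k i)) = M.evalFrom M.start (u.take (k j)) :=
      congrArg Prod.fst heq
    have hrlen2 : (rho (u.take (k i))).length = (rho (u.take (k j))).length :=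
      congrArg (fun p => ((p.2 : Fin (m + 1)) : ℕ)) heq
    have hijv : i.1 < j.1 := hij
    have hmono : k i ≤ k j := by
      by_contra hcon
      have h1 := lam_take_mono u (le_of_lt (Nat.lt_of_not_le hcon))
      rw [hk i, hk j] at h1
      have h2 : i.1 * m < j.1 * m := (Nat.mul_lt_mul_right hmpos).mpr hijv
      omega
    set w := (u.drop (k i)).take (k j - k i) with hw
    have htake : u.take (k j) = u.take (k i) ++ w := by
      rw [hw, ← List.take_add]
      congr 1
      omega
    -- lam of the cut prefixes
    have hlamtake : ∀ i' : Fin (K + 1), lam (u.take (k i')) = (List.replicate i'.1 v).flatten := by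
      intro i'
      have hdecomp : lam u = lam (u.take (k i')) ++ lam (u.drop (k i')) := by
        rw [← lam_append, List.take_append_drop]
      have h1 : (lam u).take ((lam (u.take (k i'))).length) = lam (u.take (k i')) := by
        rw [hdecomp, List.take_left]
      rw [hk i', hlam, hx] at h1
      rw [← h1, take_flatten_replicate (by omega) v]
    have hlamw : lam w = (List.replicate (j.1 - i.1) v).flatten := by
      have h1 : lam (u.take (k j)) = lam (u.take (k i)) ++ lam w := by
        rw [htake, lam_append]
      rw [hlamtake i, hlamtake j] at h1
      have h2 : (List.replicate j.1 v).flatten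
          = (List.replicate i.1 v).flatten ++ (List.replicate (j.1 - i.1) v).flatten := by
        rw [← List.flatten_append, ← List.replicate_add]
        congr 2
        omega
      rw [h2] at h1
      exact (List.append_cancel_left h1.symm)
    have hrhow : rho w = [] := by
      have h1 : rho (u.take (k j)) = rho (u.take (k i)) ++ rho w := by
        rw [htake, rho_append]
      have h2 := congrArg List.length h1
      rw [List.length_append, ← hrlen2] at h2
      have : (rho w).length = 0 := by omega
      exact List.length_eq_zero_iff.mp this
    set q := M.evalFrom M.start (u.take (k i)) with hq
    have hloop : M.evalFrom q w = q := by
      have h1 : M.evalFrom M.start (u.take (k j)) = M.evalFrom q w := by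
        rw [htake, DFA.evalFrom_of_append, hq]
      rw [← h1, ← hstate]
    refine ⟨q, ⟨j.1 - i.1, w, by omega, hloop, hrhow, hlamw⟩, ?_⟩
    refine ⟨u.take (k i), u.drop (k i), i.1, K - i.1, ?_, rfl, hlamtake i, ?_, ?_, ?_⟩
    · rw [List.take_append_drop]; exact hu
    · have hdecomp : lam u = lam (u.take (k i)) ++ lam (u.drop (k i)) := by
        rw [← lam_append, List.take_append_drop]
      rw [hlam, hx, hlamtake i] at hdecomp
      have h2 : (List.replicate K v).flatten
          = (List.replicate i.1 v).flatten ++ (List.replicate (K - i.1) v).flatten := by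
        rw [← List.flatten_append, ← List.replicate_add]
        congr 2
        omega
      rw [h2] at hdecomp
      exact (List.append_cancel_left hdecomp.symm)
    · have : i.1 ≤ K := by omega
      omega
    · rw [List.take_append_drop]; exact hrho
  rcases lt_or_gt_of_ne hne with h | h
  · exact main i₀ j₀ h heqg
  · exact main j₀ i₀ h heqg.symm

lemma idem_finite
    (hinv : ∀ u : S, ∃! v : S, u * v * u = u ∧ v * u * v = v)
    (himg : twoTapeHom A '' {w : FreeMonoid (A ⊕ A) | w.toList ∈ M.accepts} = wordProblem f)
    {V : S → List A} (hVne : ∀ s, V s ≠ []) (hVev : ∀ s, ev f (V s) = (s : WithOne S)) :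
    {e : S | e * e = e}.Finite := by
  have hinj : Set.InjOn (fun e => (LpSet M V e, BdSet M V e)) {e : S | e * e = e} := by
    intro e₁ he₁ e₂ he₂ heq
    simp only [Set.mem_setOf_eq] at he₁ he₂
    have hLp : LpSet M V e₁ = LpSet M V e₂ := congrArg Prod.fst heq
    have hBd : BdSet M V e₁ = BdSet M V e₂ := congrArg Prod.snd heq
    obtain ⟨q, hqL, hqB⟩ := exists_common himg hVne hVev he₁
    rw [hBd] at hqB
    have h1 : e₂ * e₁ = e₂ := absorb_of_mem hinv himg hVev he₁ he₂ hqL hqB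
    obtain ⟨q', hqL', hqB'⟩ := exists_common himg hVne hVev he₂
    rw [← hBd] at hqB'
    have h2 : e₁ * e₂ = e₁ := absorb_of_mem hinv himg hVev he₂ he₁ hqL' hqB'
    have hcomm := idem_comm hinv he₁ he₂
    rw [← h2, hcomm, h1]
  exact Set.Finite.of_finite_image (Set.toFinite _) hinj

lemma H_finite
    (hinv : ∀ u : S, ∃! v : S, u * v * u = u ∧ v * u * v = v)
    (himg : twoTapeHom A '' {w : FreeMonoid (A ⊕ A) | w.toList ∈ M.accepts} = wordProblem f)
    {V : S → List A} (hVne : ∀ s, V s ≠ []) (hVev : ∀ s, ev f (V s) = (s : WithOne S))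
    (g : S) : {s : S | s * inv hinv s = g ∧ inv hinv s * s = g}.Finite := by
  have hm : (V g).length = (V g).length := rfl
  rw [← Set.finite_coe_iff]
  by_cases hne : {s : S | s * inv hinv s = g ∧ inv hinv s * s = g}.Nonempty
  swap
  · rw [Set.not_nonempty_iff_eq_empty] at hne
    rw [hne]; exact Set.finite_coe_iff.mpr (Set.finite_empty)
  have hdata : ∀ s : {s : S | s * inv hinv s = g ∧ inv hinv s * s = g},
      ∃ (q : σ) (r : ℕ), r ≤ (V g).length ∧ ∃ (u : List (A ⊕ A)) (k : ℕ),
        u ∈ M.accepts ∧ lam u = V s.1 ++ V (inv hinv s.1) ∧ rho u = V g ∧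
        (lam (u.take k)).length = (V s.1).length ∧
        M.evalFrom M.start (u.take k) = q ∧ (rho (u.take k)).length = r := by
    rintro ⟨s, hs1, hs2⟩
    have hev : ev f (V s ++ V (inv hinv s)) = ev f (V g) := by
      rw [ev_append, hVev, hVev, hVev, ← WithOne.coe_mul, hs1]
    obtain ⟨u, hu, hlamu, hrhou⟩ := witness_of_eq himg _ _
      (by simp [hVne s]) (hVne g) hev
    obtain ⟨k, hk⟩ := exists_cut u (V s).length
      (by rw [hlamu, List.length_append]; omega)
    refine ⟨M.evalFrom M.start (u.take k), (rho (u.take k)).length, ?_, u, k, hu, hlamu,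
      hrhou, hk, rfl, rfl⟩
    have hdecomp : rho u = rho (u.take k) ++ rho (u.drop k) := by
      rw [← rho_append, List.take_append_drop]
    have : (rho u).length = (V g).length := by rw [hrhou]
    rw [hdecomp, List.length_append] at this
    omega
  choose q r hrle hrest using hdata
  set Φ : {s : S | s * inv hinv s = g ∧ inv hinv s * s = g} → σ × Fin ((V g).length + 1) :=
    fun s => (q s, ⟨r s, by have := hrle s; omega⟩) with hΦ
  have hinj : Function.Injective Φ := by
    intro s t heq
    have hqeq : q s = q t := congrArg Prod.fst heq
    have hreq : r s = r t := congrArg (fun p => ((p.2 : Fin ((V g).length + 1)) : ℕ)) heq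
    obtain ⟨us, ks, hus, hlams, hrhos, hks, hqs, hrs⟩ := hrest s
    obtain ⟨ut, kt, hut, hlamt, hrhot, hkt, hqt, hrt⟩ := hrest t
    -- lam decompositions
    have hlamtake : ∀ (z : {s : S | s * inv hinv s = g ∧ inv hinv s * s = g})
        (u : List (A ⊕ A)) (k : ℕ), lam u = V z.1 ++ V (inv hinv z.1) →
        (lam (u.take k)).length = (V z.1).length →
        lam (u.take k) = V z.1 ∧ lam (u.drop k) = V (inv hinv z.1) := by
      intro z u k hlamu hklen
      have hdecomp : lam u = lam (u.take k) ++ lam (u.drop k) := by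
        rw [← lam_append, List.take_append_drop]
      have h1 : (lam u).take ((lam (u.take k)).length) = lam (u.take k) := by
        rw [hdecomp, List.take_left]
      rw [hklen, hlamu, List.take_left] at h1
      constructor
      · exact h1.symm
      · have h2 : V z.1 ++ V (inv hinv z.1) = lam (u.take k) ++ lam (u.drop k) := by
          rw [← hdecomp, hlamu]
        rw [← h1] at h2
        exact (List.append_cancel_left h2).symm
    obtain ⟨hls, _⟩ := hlamtake s us ks hlams hks
    obtain ⟨_, hlt⟩ := hlamtake t ut kt hlamt hkt
    -- rho decompositions
    have hrhos1 : rho (us.take ks) = (V g).take (r s) := by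
      have hdecomp : rho us = rho (us.take ks) ++ rho (us.drop ks) := by
        rw [← rho_append, List.take_append_drop]
      have h1 : (rho us).take ((rho (us.take ks)).length) = rho (us.take ks) := by
        rw [hdecomp, List.take_left]
      rw [hrs, hrhos] at h1
      exact h1.symm
    have hrhot2 : rho (ut.drop kt) = (V g).drop (r t) := by
      have hdecomp : rho ut = rho (ut.take kt) ++ rho (ut.drop kt) := by
        rw [← rho_append, List.take_append_drop]
      have h1 : (rho ut).drop ((rho (ut.take kt)).length) = rho (ut.drop kt) := by
        rw [hdecomp, List.drop_left]
      rw [hrt, hrhot] at h1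
      exact h1.symm
    -- spliced accepted word
    have haccnew : (us.take ks ++ ut.drop kt) ∈ M.accepts := by
      rw [DFA.mem_accepts] at hut ⊢
      have h1 : M.eval (us.take ks ++ ut.drop kt) = M.evalFrom (q t) (ut.drop kt) := by
        rw [DFA.eval, DFA.evalFrom_of_append, hqs, hqeq]
      have h2 : M.eval ut = M.evalFrom (q t) (ut.drop kt) := by
        conv_lhs => rw [DFA.eval, ← List.take_append_drop kt ut]
        rw [DFA.evalFrom_of_append, hqt]
      rw [h1, ← h2]; exact hut
    have hEv := eq_of_accept himg _ haccnew
    have hrhonew : rho (us.take ks ++ ut.drop kt) = V g := by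
      rw [rho_append, hrhos1, hrhot2, hreq, List.take_append_drop]
    have hlamnew : lam (us.take ks ++ ut.drop kt) = V s.1 ++ V (inv hinv t.1) := by
      rw [lam_append, hls, hlt]
    rw [hlamnew, hrhonew, ev_append, hVev, hVev, hVev, ← WithOne.coe_mul] at hEv
    have hst : s.1 * inv hinv t.1 = g := WithOne.coe_inj.mp hEv
    exact Subtype.ext (eq_of_mul_inv_eq hinv s.2.2 t.2.1 t.2.2 hst)
  exact Finite.of_injective Φ hinj

theorem finite_of_automaton
    (hinv : ∀ u : S, ∃! v : S, u * v * u = u ∧ v * u * v = v)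
    (hsurj : Function.Surjective ⇑(FreeSemigroup.lift f))
    (himg : twoTapeHom A '' {w : FreeMonoid (A ⊕ A) | w.toList ∈ M.accepts} = wordProblem f) :
    Finite S := by
  have hV : ∀ s : S, ∃ l : List A, l ≠ [] ∧ ev f l = (s : WithOne S) := by
    intro s
    obtain ⟨w, hw⟩ := hsurj s
    exact ⟨FreeMonoid.toList (freeSemigroupToWord w), fsw_ne_nil w, by rw [ev_fsw, hw]⟩
  choose V hVne hVev using hV
  have hE := idem_finite hinv himg hVne hVev
  have hH := H_finite hinv himg hVne hVev
  -- the sets of elements with prescribed left/right idempotents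
  have hX : ∀ e₁ e₂ : S, {s : S | s * inv hinv s = e₁ ∧ inv hinv s * s = e₂}.Finite := by
    intro e₁ e₂
    rcases Set.eq_empty_or_nonempty {s : S | s * inv hinv s = e₁ ∧ inv hinv s * s = e₂}
      with hempty | ⟨s₀, hs₀1, hs₀2⟩
    · rw [hempty]; exact Set.finite_empty
    refine Set.Finite.of_finite_image (f := fun s => inv hinv s₀ * s) ?_ ?_
    · refine Set.Finite.subset (hH e₂) ?_
      rintro _ ⟨s, ⟨hs1, hs2⟩, rfl⟩
      -- the inverse of inv s₀ * s is inv s * s₀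
      have hidem : e₁ * e₁ = e₁ := by rw [← hs₀1]; exact idem_sxx hinv s₀
      have c₁ : (inv hinv s₀ * s) * (inv hinv s * s₀) * (inv hinv s₀ * s) = inv hinv s₀ * s := by
        calc (inv hinv s₀ * s) * (inv hinv s * s₀) * (inv hinv s₀ * s)
            = inv hinv s₀ * ((s * inv hinv s) * (s₀ * inv hinv s₀)) * s := by
              simp only [mul_assoc]
          _ = inv hinv s₀ * (e₁ * e₁) * s := by rw [hs1, hs₀1]
          _ = inv hinv s₀ * (s₀ * inv hinv s₀) * s := by rw [hidem, hs₀1]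
          _ = (inv hinv s₀ * s₀ * inv hinv s₀) * s := by simp only [mul_assoc]
          _ = inv hinv s₀ * s := by rw [inv_spec₂ hinv]
      have c₂ : (inv hinv s * s₀) * (inv hinv s₀ * s) * (inv hinv s * s₀) = inv hinv s * s₀ := by
        calc (inv hinv s * s₀) * (inv hinv s₀ * s) * (inv hinv s * s₀)
            = inv hinv s * ((s₀ * inv hinv s₀) * (s * inv hinv s)) * s₀ := by
              simp only [mul_assoc]
          _ = inv hinv s * (e₁ * e₁) * s₀ := by rw [hs₀1, hs1]
          _ = inv hinv s * (s * inv hinv s) * s₀ := by rw [hidem, hs1]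
          _ = (inv hinv s * s * inv hinv s) * s₀ := by simp only [mul_assoc]
          _ = inv hinv s * s₀ := by rw [inv_spec₂ hinv]
      have hinveq : inv hinv (inv hinv s₀ * s) = inv hinv s * s₀ := (inv_unique hinv c₁ c₂).symm
      constructor
      · rw [hinveq]
        calc (inv hinv s₀ * s) * (inv hinv s * s₀)
            = inv hinv s₀ * (s * inv hinv s) * s₀ := by simp only [mul_assoc]
          _ = inv hinv s₀ * (s₀ * inv hinv s₀) * s₀ := by rw [hs1, ← hs₀1]
          _ = (inv hinv s₀ * s₀) * (inv hinv s₀ * s₀) := by simp only [mul_assoc]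
          _ = e₂ := by rw [hs₀2]; rw [← hs₀2]; exact idem_xxs hinv s₀
      · rw [hinveq]
        calc (inv hinv s * s₀) * (inv hinv s₀ * s)
            = inv hinv s * (s₀ * inv hinv s₀) * s := by simp only [mul_assoc]
          _ = inv hinv s * (s * inv hinv s) * s := by rw [hs₀1, ← hs1]
          _ = (inv hinv s * s) * (inv hinv s * s) := by simp only [mul_assoc]
          _ = e₂ := by rw [hs2]; rw [← hs2]; exact idem_xxs hinv s
    · intro s hs t ht heq
      simp only [Set.mem_setOf_eq] at hs ht
      have recov : ∀ z : S, z * inv hinv z = e₁ → s₀ * (inv hinv s₀ * z) = z := by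
        intro z hz
        calc s₀ * (inv hinv s₀ * z) = (s₀ * inv hinv s₀) * z := by rw [mul_assoc]
          _ = (z * inv hinv z) * z := by rw [hs₀1, ← hz]
          _ = z := inv_spec₁ hinv z
      have heq' : inv hinv s₀ * s = inv hinv s₀ * t := heq
      calc s = s₀ * (inv hinv s₀ * s) := (recov s hs.1).symm
        _ = s₀ * (inv hinv s₀ * t) := by rw [heq']
        _ = t := recov t ht.1
  -- cover S
  have hcover : (Set.univ : Set S) ⊆
      ⋃ e₁ ∈ {e : S | e * e = e}, ⋃ e₂ ∈ {e : S | e * e = e},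
        {s : S | s * inv hinv s = e₁ ∧ inv hinv s * s = e₂} := by
    intro s _
    simp only [Set.mem_iUnion, Set.mem_setOf_eq]
    exact ⟨s * inv hinv s, idem_sxx hinv s, inv hinv s * s, idem_xxs hinv s, rfl, rfl⟩
  have hfin : (Set.univ : Set S).Finite := by
    refine Set.Finite.subset ?_ hcover
    exact hE.biUnion fun e₁ _ => hE.biUnion fun e₂ _ => hX e₁ e₂
  exact Set.finite_univ_iff.mp hfin

end Automaton

section EasyDirection

variable (S : Type) [Semigroup S]

/-- the two-tape automaton checking equality of evaluations in `S¹` -/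
def dfaOf : DFA (S ⊕ S) (WithOne S × WithOne S) where
  step := fun p c =>
    Sum.elim (fun (a : S) => (p.1 * (a : WithOne S), p.2))
      (fun (a : S) => (p.1, p.2 * (a : WithOne S))) c
  start := (1, 1)
  accept := {p | p.1 = p.2 ∧ p.1 ≠ 1}

lemma dfaOf_evalFrom (p : WithOne S × WithOne S) (u : List (S ⊕ S)) :
    (dfaOf S).evalFrom p u = (p.1 * ev id (lam u), p.2 * ev id (rho u)) := by
  induction u generalizing p with
  | nil => simp
  | cons c u ih =>
    have hstep : (dfaOf S).evalFrom p (c :: u) = (dfaOf S).evalFrom ((dfaOf S).step p c) u := rfl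
    rw [hstep, ih]
    cases c with
    | inl a => simp [dfaOf, ev_cons, mul_assoc]
    | inr a => simp [dfaOf, ev_cons, mul_assoc]

theorem hasRWP_of_finite (hfin : Finite S) : HasRationalWordProblem S := by
  have : Fintype S := Fintype.ofFinite S
  refine ⟨S, inferInstance, id, ?_, ?_⟩
  · intro s
    exact ⟨FreeSemigroup.of s, FreeSemigroup.lift_of id s⟩
  · refine ⟨(dfaOf S).accepts, ?_, ?_⟩
    · letI : Fintype (WithOne S) := inferInstanceAs (Fintype (Option S))
      exact ⟨WithOne S × WithOne S, inferInstance, dfaOf S, rfl⟩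
    · ext p
      obtain ⟨x, y⟩ := p
      constructor
      · rintro ⟨w, hw, hweq⟩
        simp only [Set.mem_setOf_eq] at hw
        rw [DFA.mem_accepts, DFA.eval, dfaOf_evalFrom] at hw
        obtain ⟨heq, hne1⟩ := hw
        simp only [dfaOf, one_mul] at heq hne1
        have hempty : lam (FreeMonoid.toList w) ≠ [] := by
          intro hcon
          rw [hcon] at hne1
          exact hne1 rfl
        have hemptyr : rho (FreeMonoid.toList w) ≠ [] := by
          intro hcon
          rw [hcon, ev_nil] at heq
          exact hne1 heq
        rw [← FreeMonoid.ofList_toList w, twoTapeHom_ofList] at hweq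
        rw [← hweq]
        rw [mem_wordProblem_iff]
        exact ⟨by simpa [FreeMonoid.toList_ofList] using hempty,
          by simpa [FreeMonoid.toList_ofList] using hemptyr,
          by simpa [FreeMonoid.toList_ofList] using heq⟩
      · intro hp
        rw [mem_wordProblem_iff] at hp
        obtain ⟨hx, hy, hev⟩ := hp
        refine ⟨FreeMonoid.ofList
          ((FreeMonoid.toList x).map Sum.inl ++ (FreeMonoid.toList y).map Sum.inr), ?_, ?_⟩
        · simp only [Set.mem_setOf_eq, FreeMonoid.toList_ofList]
          rw [DFA.mem_accepts, DFA.eval, dfaOf_evalFrom]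
          constructor
          · simp only [dfaOf, lam_append, rho_append, lam_map_inl, lam_map_inr, rho_map_inl,
              rho_map_inr, List.append_nil, List.nil_append, one_mul]
            exact hev
          · simp only [dfaOf, lam_append, lam_map_inl, lam_map_inr, List.append_nil, one_mul]
            exact ev_ne_one id _ hx
        · rw [twoTapeHom_ofList]
          simp only [lam_append, rho_append, lam_map_inl, lam_map_inr, rho_map_inl,
            rho_map_inr, List.append_nil, List.nil_append]
          rw [FreeMonoid.ofList_toList, FreeMonoid.ofList_toList]

end EasyDirection

end InvWP



/-- **Anisimov's theorem for inverse semigroups.**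
An inverse semigroup (a semigroup in which every element has a unique inverse)
has rational word problem if and only if it is finite. -/
theorem inverse_semigroup_hasRationalWordProblem_iff_finite (S : Type) [Semigroup S]
    (hinv : ∀ u : S, ∃! v : S, u * v * u = u ∧ v * u * v = v) :
    HasRationalWordProblem S ↔ Finite S := by
  constructor
  · rintro ⟨A, instA, f, hsurj, L, ⟨σ, instσ, M, hacc⟩, himg⟩
    rw [← hacc] at himg
    exact InvWP.finite_of_automaton hinv hsurj himg
  · exact InvWP.hasRWP_of_finite S
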